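/- Let T > 0, λ : [0,T] → [0,∞) continuous with λ > 0 on (0,T], Λ(t) := ∫₀ᵗ λ(s) ds, and fix ε ∈ (0, 1/2) and C > 0. Let θ : (0,T] × ℝ^d × ℝ^d → ℝ be differentiable in (x,ξ) with |∇ₓθ(t,x,ξ)| ≤ C·(λ(t)/√Λ(t))·⟨x⟩^{−1/2+ε}·⟨ξ⟩^{1/2+ε} and |∇_ξθ(t,x,ξ)| ≤ C·(λ(t)/√Λ(t))·⟨x⟩^{1/2+ε}·⟨ξ⟩^{−1/2+ε}. If q, p : [s, t₀] → ℝ^d (0 < s ≤ t₀ ≤ T) solve q' = ∇_ξθ(τ,q,p), p' = −∇ₓθ(τ,q,p) with q(s) = y, p(s) = η, then there is C' > 0 depending only on C and ε such that for all t ∈ [s, t₀]: ⟨η⟩·e^{−C'(√Λ(t)−√Λ(s))} ≤ ⟨p(t)⟩ ≤ ⟨η⟩·e^{C'(√Λ(t)−√Λ(s))} and ⟨y⟩·e^{−C'(√Λ(t)−√Λ(s))} ≤ ⟨q(t)⟩ ≤ ⟨y⟩·e^{C'(√Λ(t)−√Λ(s))}. -/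

import Mathlib

/-- `Λ(t) = ∫₀ᵗ λ(s) ds`. -/
noncomputable def Lam (lam : ℝ → ℝ) (t : ℝ) : ℝ := ∫ s in (0:ℝ)..t, lam s

/-- The weight `⟨y⟩ = (e + |y|²)^{1/2}`. -/
noncomputable def jw {d : ℕ} (y : EuclideanSpace ℝ (Fin d)) : ℝ :=
  Real.sqrt (Real.exp 1 + ‖y‖ ^ 2)

lemma jw_aux_pos {d : ℕ} (y : EuclideanSpace ℝ (Fin d)) : 0 < Real.exp 1 + ‖y‖ ^ 2 := by
  positivity

lemma jw_pos {d : ℕ} (y : EuclideanSpace ℝ (Fin d)) : 0 < jw y :=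
  Real.sqrt_pos.mpr (jw_aux_pos y)

lemma one_le_jw {d : ℕ} (y : EuclideanSpace ℝ (Fin d)) : 1 ≤ jw y := by
  have h1 : (1:ℝ) ≤ Real.exp 1 + ‖y‖ ^ 2 := by
    nlinarith [Real.add_one_le_exp (1:ℝ), sq_nonneg ‖y‖]
  calc (1:ℝ) = Real.sqrt 1 := Real.sqrt_one.symm
  _ ≤ jw y := Real.sqrt_le_sqrt h1

lemma jw_sq {d : ℕ} (y : EuclideanSpace ℝ (Fin d)) : jw y ^ 2 = Real.exp 1 + ‖y‖ ^ 2 :=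
  Real.sq_sqrt (jw_aux_pos y).le

lemma norm_le_jw {d : ℕ} (y : EuclideanSpace ℝ (Fin d)) : ‖y‖ ≤ jw y := by
  nlinarith [jw_sq y, one_le_jw y, norm_nonneg y, Real.exp_pos 1]

lemma jw_eq_exp {d : ℕ} (y : EuclideanSpace ℝ (Fin d)) :
    jw y = Real.exp (Real.log (Real.exp 1 + ‖y‖ ^ 2) / 2) := by
  rw [jw, Real.sqrt_eq_rpow, Real.rpow_def_of_pos (jw_aux_pos y), mul_one_div]

/-- Grönwall-type comparability for the weight of a curve whose derivative is controlled by
`K · λ/√Λ · ⟨u⟩`. -/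
lemma jw_gronwall {d : ℕ} (K : ℝ) (lam : ℝ → ℝ) (s t₀ : ℝ) (hst : s ≤ t₀)
    (hLc : ContinuousOn (fun τ => Real.sqrt (Lam lam τ)) (Set.Icc s t₀))
    (hLd : ∀ τ ∈ Set.Ioo s t₀, HasDerivAt (Lam lam) (lam τ) τ)
    (hLpos : ∀ τ ∈ Set.Icc s t₀, 0 < Lam lam τ)
    (u v : ℝ → EuclideanSpace ℝ (Fin d))
    (hu : ∀ τ ∈ Set.Icc s t₀, HasDerivWithinAt u (v τ) (Set.Icc s t₀) τ)
    (hv : ∀ τ ∈ Set.Icc s t₀, ‖v τ‖ ≤ K * (lam τ / Real.sqrt (Lam lam τ)) * jw (u τ)) :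
    ∀ t ∈ Set.Icc s t₀,
      jw (u s) * Real.exp (-(2 * K * (Real.sqrt (Lam lam t) - Real.sqrt (Lam lam s)))) ≤ jw (u t) ∧
      jw (u t) ≤ jw (u s) * Real.exp (2 * K * (Real.sqrt (Lam lam t) - Real.sqrt (Lam lam s))) := by
  -- `E` is the derivative of `τ ↦ log (e + ‖u τ‖²)`
  set E : ℝ → ℝ := fun τ =>
    ((inner ℝ (u τ) (v τ) : ℝ) + (inner ℝ (v τ) (u τ) : ℝ)) / (Real.exp 1 + ‖u τ‖ ^ 2) with hE_def
  have hh : ∀ τ ∈ Set.Icc s t₀,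
      HasDerivWithinAt (fun r => Real.log (Real.exp 1 + ‖u r‖ ^ 2)) (E τ) (Set.Icc s t₀) τ := by
    intro τ hτ
    have h1 := (((hu τ hτ).inner ℝ (hu τ hτ)).const_add (Real.exp 1))
    have h2 := h1.log (by rw [real_inner_self_eq_norm_sq]; exact (jw_aux_pos (u τ)).ne')
    have hfun : (fun r => Real.log (Real.exp 1 + (inner ℝ (u r) (u r) : ℝ)))
        = fun r => Real.log (Real.exp 1 + ‖u r‖ ^ 2) := by
      funext r; rw [real_inner_self_eq_norm_sq]
    rw [hfun] at h2
    have hval : ((inner ℝ (u τ) (v τ) : ℝ) + (inner ℝ (v τ) (u τ) : ℝ))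
        / (Real.exp 1 + (inner ℝ (u τ) (u τ) : ℝ)) = E τ := by
      rw [hE_def]; rw [real_inner_self_eq_norm_sq]
    rw [hval] at h2
    exact h2
  have hEbound : ∀ τ ∈ Set.Icc s t₀, |E τ| ≤ 2 * (K * (lam τ / Real.sqrt (Lam lam τ))) := by
    intro τ hτ
    have hw2 := jw_sq (u τ)
    have hw1 := one_le_jw (u τ)
    have hnu := norm_le_jw (u τ)
    have hvb := hv τ hτ
    have hM0 : 0 ≤ K * (lam τ / Real.sqrt (Lam lam τ)) := by
      nlinarith [(norm_nonneg (v τ)).trans hvb, jw_pos (u τ)]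
    have hinner : |(inner ℝ (v τ) (u τ) : ℝ)| ≤ ‖v τ‖ * ‖u τ‖ := abs_real_inner_le_norm _ _
    have hcomm : (inner ℝ (u τ) (v τ) : ℝ) = (inner ℝ (v τ) (u τ) : ℝ) := real_inner_comm _ _
    have hmul : ‖v τ‖ * ‖u τ‖ ≤ (K * (lam τ / Real.sqrt (Lam lam τ)) * jw (u τ)) * jw (u τ) :=
      mul_le_mul hvb hnu (norm_nonneg _) (mul_nonneg hM0 (jw_pos _).le)
    have hden : (0:ℝ) < Real.exp 1 + ‖u τ‖ ^ 2 := jw_aux_pos (u τ)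
    rw [hE_def]
    rw [abs_div, abs_of_pos hden, div_le_iff₀ hden]
    obtain ⟨hl, hr⟩ := abs_le.mp hinner
    rw [abs_le]
    constructor <;> nlinarith [jw_pos (u τ)]
  have hucont : ContinuousOn u (Set.Icc s t₀) := fun τ hτ => (hu τ hτ).continuousWithinAt
  have hhcont : ContinuousOn (fun r => Real.log (Real.exp 1 + ‖u r‖ ^ 2)) (Set.Icc s t₀) :=
    ContinuousOn.log (continuousOn_const.add ((hucont.norm).pow 2))
      (fun τ _ => (jw_aux_pos (u τ)).ne')
  have hgd : ∀ τ ∈ Set.Ioo s t₀, HasDerivWithinAt (fun r => Real.sqrt (Lam lam r))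
      (lam τ / (2 * Real.sqrt (Lam lam τ))) (Set.Ioo s t₀) τ := by
    intro τ hτ
    exact ((hLd τ hτ).sqrt (hLpos τ (Set.Ioo_subset_Icc_self hτ)).ne').hasDerivWithinAt
  have hkey : ∀ τ ∈ Set.Ioo s t₀,
      4 * K * (lam τ / (2 * Real.sqrt (Lam lam τ)))
        = 2 * (K * (lam τ / Real.sqrt (Lam lam τ))) := by
    intro τ hτ
    have hr : Real.sqrt (Lam lam τ) ≠ 0 :=
      (Real.sqrt_pos.mpr (hLpos τ (Set.Ioo_subset_Icc_self hτ))).ne'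
    field_simp
    ring
  have mono1 : MonotoneOn
      (fun τ => 4 * K * Real.sqrt (Lam lam τ) - Real.log (Real.exp 1 + ‖u τ‖ ^ 2))
      (Set.Icc s t₀) := by
    apply monotoneOn_of_hasDerivWithinAt_nonneg (convex_Icc s t₀)
      ((continuousOn_const.mul hLc).sub hhcont)
      (f' := fun τ => 4 * K * (lam τ / (2 * Real.sqrt (Lam lam τ))) - E τ)
    · intro τ hτ
      rw [interior_Icc] at hτ ⊢
      exact ((hgd τ hτ).const_mul (4*K)).sub ((hh τ (Set.Ioo_subset_Icc_self hτ)).mono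
        Set.Ioo_subset_Icc_self)
    · intro τ hτ
      rw [interior_Icc] at hτ
      have := abs_le.mp (hEbound τ (Set.Ioo_subset_Icc_self hτ))
      rw [hkey τ hτ]
      linarith [this.2]
  have mono2 : MonotoneOn
      (fun τ => 4 * K * Real.sqrt (Lam lam τ) + Real.log (Real.exp 1 + ‖u τ‖ ^ 2))
      (Set.Icc s t₀) := by
    apply monotoneOn_of_hasDerivWithinAt_nonneg (convex_Icc s t₀)
      ((continuousOn_const.mul hLc).add hhcont)
      (f' := fun τ => 4 * K * (lam τ / (2 * Real.sqrt (Lam lam τ))) + E τ)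
    · intro τ hτ
      rw [interior_Icc] at hτ ⊢
      exact ((hgd τ hτ).const_mul (4*K)).add ((hh τ (Set.Ioo_subset_Icc_self hτ)).mono
        Set.Ioo_subset_Icc_self)
    · intro τ hτ
      rw [interior_Icc] at hτ
      have := abs_le.mp (hEbound τ (Set.Ioo_subset_Icc_self hτ))
      rw [hkey τ hτ]
      linarith [this.1]
  intro t ht
  have hsmem : s ∈ Set.Icc s t₀ := Set.left_mem_Icc.mpr hst
  have m1 := mono1 hsmem ht ht.1
  have m2 := mono2 hsmem ht ht.1
  simp only at m1 m2
  rw [jw_eq_exp (u s), jw_eq_exp (u t)]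
  constructor
  · rw [← Real.exp_add, Real.exp_le_exp]
    linarith
  · rw [← Real.exp_add, Real.exp_le_exp]
    linarith

/-- From the proof of Lemma 5.3 of the paper: in the pseudodifferential zone, the
Hamiltonian flow satisfies `⟨p(t)⟩ ≍ ⟨η⟩`, `⟨q(t)⟩ ≍ ⟨y⟩` up to factors
`e^{±C'(√Λ(t)−√Λ(s))}`, with `C'` depending only on `C` and `ε`. -/
theorem pd_zone_flow_comparability
    (d : ℕ) (C ε : ℝ) (hC : 0 < C) (hε0 : 0 < ε) (hε1 : ε < 1/2) :
    ∃ C' : ℝ, 0 < C' ∧ ∀ T : ℝ, 0 < T →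
      ∀ lam : ℝ → ℝ, ContinuousOn lam (Set.Icc 0 T) →
        (∀ t ∈ Set.Icc 0 T, 0 ≤ lam t) → (∀ t ∈ Set.Ioc 0 T, 0 < lam t) →
      ∀ θ : ℝ → EuclideanSpace ℝ (Fin d) → EuclideanSpace ℝ (Fin d) → ℝ,
        (∀ t ∈ Set.Ioc 0 T, ∀ (x ξ : EuclideanSpace ℝ (Fin d)),
          DifferentiableAt ℝ (fun x' => θ t x' ξ) x) →
        (∀ t ∈ Set.Ioc 0 T, ∀ (x ξ : EuclideanSpace ℝ (Fin d)),
          DifferentiableAt ℝ (fun ξ' => θ t x ξ') ξ) →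
        (∀ t ∈ Set.Ioc 0 T, ∀ (x ξ : EuclideanSpace ℝ (Fin d)),
          ‖gradient (fun x' => θ t x' ξ) x‖ ≤
            C * (lam t / Real.sqrt (Lam lam t)) *
              jw x ^ (-(1/2 : ℝ) + ε) * jw ξ ^ ((1/2 : ℝ) + ε)) →
        (∀ t ∈ Set.Ioc 0 T, ∀ (x ξ : EuclideanSpace ℝ (Fin d)),
          ‖gradient (fun ξ' => θ t x ξ') ξ‖ ≤
            C * (lam t / Real.sqrt (Lam lam t)) *
              jw x ^ ((1/2 : ℝ) + ε) * jw ξ ^ (-(1/2 : ℝ) + ε)) →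
      ∀ s t₀ : ℝ, 0 < s → s ≤ t₀ → t₀ ≤ T →
      ∀ q p : ℝ → EuclideanSpace ℝ (Fin d),
        (∀ τ ∈ Set.Icc s t₀, HasDerivWithinAt q
          (gradient (fun ξ' => θ τ (q τ) ξ') (p τ)) (Set.Icc s t₀) τ) →
        (∀ τ ∈ Set.Icc s t₀, HasDerivWithinAt p
          (-(gradient (fun x' => θ τ x' (p τ)) (q τ))) (Set.Icc s t₀) τ) →
      ∀ t ∈ Set.Icc s t₀,
        jw (p s) * Real.exp (-(C' * (Real.sqrt (Lam lam t) - Real.sqrt (Lam lam s))))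
            ≤ jw (p t) ∧
        jw (p t) ≤
          jw (p s) * Real.exp (C' * (Real.sqrt (Lam lam t) - Real.sqrt (Lam lam s))) ∧
        jw (q s) * Real.exp (-(C' * (Real.sqrt (Lam lam t) - Real.sqrt (Lam lam s))))
            ≤ jw (q t) ∧
        jw (q t) ≤
          jw (q s) * Real.exp (C' * (Real.sqrt (Lam lam t) - Real.sqrt (Lam lam s))) := by
  refine ⟨2 * C, by positivity, ?_⟩
  intro T hT lam hlamc hlam0 hlampos θ _ _ hgx hgξ s t₀ hs hst₀ ht₀T q p hq hp
  -- basic facts about `Λ`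
  have hι : ∀ τ ∈ Set.Ioc 0 T, IntervalIntegrable lam MeasureTheory.volume 0 τ := by
    intro τ hτ
    apply ContinuousOn.intervalIntegrable
    apply hlamc.mono
    rw [Set.uIcc_of_le hτ.1.le]
    exact Set.Icc_subset_Icc le_rfl hτ.2
  have hsub : Set.Icc s t₀ ⊆ Set.Ioc 0 T :=
    fun τ hτ => ⟨lt_of_lt_of_le hs hτ.1, le_trans hτ.2 ht₀T⟩
  have hLpos : ∀ τ ∈ Set.Icc s t₀, 0 < Lam lam τ := by
    intro τ hτ
    have hτ' : τ ∈ Set.Ioc 0 T := hsub hτ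
    exact intervalIntegral.intervalIntegral_pos_of_pos_on (hι τ hτ')
      (fun x hx => hlampos x ⟨hx.1, hx.2.le.trans hτ'.2⟩) hτ'.1
  have hLamc : ContinuousOn (Lam lam) (Set.Icc 0 T) := by
    have h0 : (0:ℝ) ∈ Set.uIcc 0 T := Set.left_mem_uIcc
    have := intervalIntegral.continuousOn_primitive_interval' (hι T ⟨hT, le_rfl⟩) h0
    rwa [Set.uIcc_of_le hT.le] at this
  have hLc : ContinuousOn (fun τ => Real.sqrt (Lam lam τ)) (Set.Icc s t₀) := by
    apply Real.continuous_sqrt.comp_continuousOn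
    exact hLamc.mono (Set.Icc_subset_Icc hs.le ht₀T)
  have hLd : ∀ τ ∈ Set.Ioo s t₀, HasDerivAt (Lam lam) (lam τ) τ := by
    intro τ hτ
    have hτ0 : 0 < τ := lt_trans hs hτ.1
    have hτT : τ < T := lt_of_lt_of_le hτ.2 ht₀T
    have hmem : Set.Icc (0:ℝ) T ∈ nhds τ := Icc_mem_nhds hτ0 hτT
    have hmeas : StronglyMeasurableAtFilter lam (nhds τ) :=
      ⟨Set.Icc 0 T, hmem, hlamc.aestronglyMeasurable measurableSet_Icc⟩
    exact intervalIntegral.integral_hasDerivAt_right (hι τ ⟨hτ0, hτT.le⟩) hmeas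
      (hlamc.continuousAt hmem)
  -- the key pointwise bound on the right-hand sides
  have hbound : ∀ τ ∈ Set.Icc s t₀, ∀ x ξ : EuclideanSpace ℝ (Fin d),
      C * (lam τ / Real.sqrt (Lam lam τ)) * jw x ^ (-(1/2 : ℝ) + ε) * jw ξ ^ ((1/2 : ℝ) + ε)
        ≤ C * (lam τ / Real.sqrt (Lam lam τ)) * jw ξ := by
    intro τ hτ x ξ
    have hlτ : 0 ≤ lam τ := hlam0 τ ⟨(hsub hτ).1.le, (hsub hτ).2⟩
    have hA : 0 ≤ C * (lam τ / Real.sqrt (Lam lam τ)) := by positivity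
    have h1 : jw x ^ (-(1/2 : ℝ) + ε) ≤ 1 :=
      Real.rpow_le_one_of_one_le_of_nonpos (one_le_jw x) (by linarith)
    have h2 : jw ξ ^ ((1/2 : ℝ) + ε) ≤ jw ξ := by
      nth_rewrite 2 [← Real.rpow_one (jw ξ)]
      exact Real.rpow_le_rpow_of_exponent_le (one_le_jw ξ) (by linarith)
    have h3 : (0:ℝ) ≤ jw ξ ^ ((1/2 : ℝ) + ε) := Real.rpow_nonneg (jw_pos ξ).le _
    calc C * (lam τ / Real.sqrt (Lam lam τ)) * jw x ^ (-(1/2 : ℝ) + ε) * jw ξ ^ ((1/2 : ℝ) + ε)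
        ≤ (C * (lam τ / Real.sqrt (Lam lam τ)) * 1) * jw ξ :=
          mul_le_mul (mul_le_mul_of_nonneg_left h1 hA) h2 h3 (by positivity)
      _ = C * (lam τ / Real.sqrt (Lam lam τ)) * jw ξ := by ring
  -- apply the Grönwall lemma to `p`
  have hP := jw_gronwall C lam s t₀ hst₀ hLc hLd hLpos p
    (fun τ => -(gradient (fun x' => θ τ x' (p τ)) (q τ))) hp
    (by
      intro τ hτ
      rw [norm_neg]
      exact le_trans (hgx τ (hsub hτ) (q τ) (p τ)) (hbound τ hτ (q τ) (p τ)))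
  -- apply the Grönwall lemma to `q`
  have hQ := jw_gronwall C lam s t₀ hst₀ hLc hLd hLpos q
    (fun τ => gradient (fun ξ' => θ τ (q τ) ξ') (p τ)) hq
    (by
      intro τ hτ
      have := hgξ τ (hsub hτ) (q τ) (p τ)
      refine le_trans this ?_
      have h' := hbound τ hτ (p τ) (q τ)
      calc C * (lam τ / Real.sqrt (Lam lam τ)) * jw (q τ) ^ ((1/2:ℝ) + ε)
            * jw (p τ) ^ (-(1/2:ℝ) + ε)
          = C * (lam τ / Real.sqrt (Lam lam τ)) * jw (p τ) ^ (-(1/2:ℝ) + ε)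
            * jw (q τ) ^ ((1/2:ℝ) + ε) := by ring
        _ ≤ C * (lam τ / Real.sqrt (Lam lam τ)) * jw (q τ) := h')
  intro t ht
  exact ⟨(hP t ht).1, (hP t ht).2, (hQ t ht).1, (hQ t ht).2⟩
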